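/- For integers 2 ≤ d' ≤ d and k ≥ 1, the d'-Fibonacci digraph F(d',k) is isomorphic to an induced subdigraph of F(d,k): there exists an injective map from the vertex set of F(d',k) into the vertex set of F(d,k) such that for all vertices x, y of F(d',k), there is an arc from x to y in F(d',k) if and only if there is an arc from their images in F(d,k). -/
import Mathlib


/-- A vertex of the d-Fibonacci digraph F(d,k): a sequence x : Fin k → ZMod d
such that whenever a digit is nonzero, the next digit is its successor mod d. -/
def fibIsVertex (d k : ℕ) (x : Fin k → ZMod d) : Prop :=
  ∀ (i : ℕ) (h : i + 1 < k),
    x ⟨i, Nat.lt_of_succ_lt h⟩ ≠ 0 →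
      x ⟨i + 1, h⟩ = x ⟨i, Nat.lt_of_succ_lt h⟩ + 1

/-- The arc relation of F(d,k): y is the left shift of x, and if the last digit
of x is nonzero then the last digit of y is its successor mod d. -/
def fibArc (d k : ℕ) (x y : Fin k → ZMod d) : Prop :=
  (∀ (i : ℕ) (h : i + 1 < k), y ⟨i, Nat.lt_of_succ_lt h⟩ = x ⟨i + 1, h⟩) ∧
  (∀ h : 0 < k, x ⟨k - 1, Nat.sub_lt h Nat.one_pos⟩ ≠ 0 →
    y ⟨k - 1, Nat.sub_lt h Nat.one_pos⟩ = x ⟨k - 1, Nat.sub_lt h Nat.one_pos⟩ + 1)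

noncomputable def fibG (d d' : ℕ) (a : ZMod d') : ZMod d :=
  if a = 0 then 0 else ((a.val + (d - d') : ℕ) : ZMod d)

lemma fibG_val {d d' : ℕ} (hd' : 2 ≤ d') (hdd : d' ≤ d) (a : ZMod d') (ha : a ≠ 0) :
    haveI : NeZero d := ⟨by omega⟩
    (fibG d d' a).val = a.val + (d - d') := by
  haveI : NeZero d := ⟨by omega⟩
  haveI : NeZero d' := ⟨by omega⟩
  have h1 : a.val < d' := ZMod.val_lt a
  rw [fibG, if_neg ha, ZMod.val_natCast_of_lt (by omega)]

lemma fibG_eq_zero_iff {d d' : ℕ} (hd' : 2 ≤ d') (hdd : d' ≤ d) (a : ZMod d') :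
    fibG d d' a = 0 ↔ a = 0 := by
  haveI : NeZero d := ⟨by omega⟩
  haveI : NeZero d' := ⟨by omega⟩
  constructor
  · intro h
    by_contra ha
    have h1 : 0 < a.val := ZMod.val_pos.mpr ha
    have := fibG_val hd' hdd a ha
    rw [h] at this
    simp [ZMod.val_zero] at this
    omega
  · intro h; simp [h, fibG]

lemma fibG_inj {d d' : ℕ} (hd' : 2 ≤ d') (hdd : d' ≤ d) :
    Function.Injective (fibG d d' : ZMod d' → ZMod d) := by
  haveI : NeZero d := ⟨by omega⟩
  haveI : NeZero d' := ⟨by omega⟩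
  intro a b hab
  by_cases ha : a = 0
  · by_cases hb : b = 0
    · rw [ha, hb]
    · exfalso; apply (fibG_eq_zero_iff hd' hdd b).not.mpr hb
      rw [← hab, ha, fibG]; simp
  · by_cases hb : b = 0
    · exfalso; apply (fibG_eq_zero_iff hd' hdd a).not.mpr ha
      rw [hab, hb, fibG]; simp
    · have h1 := fibG_val hd' hdd a ha
      have h2 := fibG_val hd' hdd b hb
      have : a.val = b.val := by rw [hab] at h1; omega
      exact ZMod.val_injective d' this

lemma fibG_succ {d d' : ℕ} (hd' : 2 ≤ d') (hdd : d' ≤ d) (a : ZMod d') (ha : a ≠ 0) :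
    fibG d d' (a + 1) = fibG d d' a + 1 := by
  haveI : NeZero d := ⟨by omega⟩
  haveI : NeZero d' := ⟨by omega⟩
  have h1 : a.val < d' := ZMod.val_lt a
  have h0 : 0 < a.val := ZMod.val_pos.mpr ha
  have hrepr : ((a.val : ℕ) : ZMod d') = a := by
    simp [ZMod.natCast_val, ZMod.cast_id]
  by_cases hc : a.val + 1 = d'
  · have ha1 : a + 1 = 0 := by
      calc a + 1 = ((a.val : ℕ) : ZMod d') + 1 := by rw [hrepr]
        _ = ((a.val + 1 : ℕ) : ZMod d') := by push_cast; ring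
        _ = ((d' : ℕ) : ZMod d') := by rw [hc]
        _ = 0 := ZMod.natCast_self d'
    rw [ha1]
    rw [fibG, if_pos rfl, fibG, if_neg ha]
    have e1 : (a.val + (d - d') : ℕ) = d - 1 := by omega
    rw [e1]
    have e2 : ((d - 1 : ℕ) : ZMod d) + 1 = ((d - 1 + 1 : ℕ) : ZMod d) := by push_cast; ring
    rw [e2]
    have e3 : d - 1 + 1 = d := by omega
    rw [e3]; simp
  · have hlt : a.val + 1 < d' := by omega
    have hval1 : (a + 1).val = a.val + 1 := by
      have : a + 1 = ((a.val + 1 : ℕ) : ZMod d') := by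
        push_cast; rw [hrepr]
      rw [this, ZMod.val_natCast_of_lt hlt]
    have ha1 : a + 1 ≠ 0 := by
      intro h; rw [h, ZMod.val_zero] at hval1; omega
    rw [fibG, if_neg ha1, fibG, if_neg ha, hval1]
    push_cast; ring

/-- for 2 ≤ d' ≤ d, F(d',k) is isomorphic to an induced subdigraph
of F(d,k). -/
theorem fib_induced_sub (d d' k : ℕ) (hd' : 2 ≤ d') (hdd : d' ≤ d) (hk : 1 ≤ k) :
    ∃ f : {x : Fin k → ZMod d' // fibIsVertex d' k x} →
          {x : Fin k → ZMod d // fibIsVertex d k x},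
      Function.Injective f ∧
      ∀ x y : {x : Fin k → ZMod d' // fibIsVertex d' k x},
        fibArc d' k x.1 y.1 ↔ fibArc d k (f x).1 (f y).1 := by
  set g := (fibG d d' : ZMod d' → ZMod d) with hg
  have ginj := fibG_inj hd' hdd
  have g0 : ∀ a : ZMod d', g a = 0 ↔ a = 0 := fibG_eq_zero_iff hd' hdd
  have gsucc : ∀ a : ZMod d', a ≠ 0 → g (a + 1) = g a + 1 := fibG_succ hd' hdd
  refine ⟨fun x => ⟨fun i => g (x.1 i), ?_⟩, ?_, ?_⟩
  · intro i h hne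
    dsimp only at hne ⊢
    replace hne := (g0 _).not.mp hne
    rw [x.2 i h hne, gsucc _ hne]
  · intro x y hxy
    apply Subtype.ext
    funext i
    apply ginj
    exact congrFun (congrArg Subtype.val hxy) i
  · intro x y
    constructor
    · rintro ⟨h1, h2⟩
      refine ⟨fun i h => congrArg g (h1 i h), fun h hne => ?_⟩
      dsimp only at hne ⊢
      replace hne := (g0 _).not.mp hne
      rw [h2 h hne, gsucc _ hne]
    · rintro ⟨h1, h2⟩
      dsimp only at h1 h2
      refine ⟨fun i h => ginj (h1 i h), fun h hne => ?_⟩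
      apply ginj
      rw [← hg]
      rw [h2 h ((g0 _).not.mpr hne), ← gsucc _ hne]
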